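/- Assume W·B·W = B, 0 < δ ≤ r₀/2, 0 < ε ≤ δ/4, and let D > 0 be a constant such that m(Ω_{δ'−ε',B}) ≥ (1 − Dε'/δ')·m(Ω_{δ',B}) for all 0 < δ' ≤ r₀/2 and 0 < ε' ≤ δ'/2. If α > 0, ε < δ/(2D), and there exists h ∈ U_ε with (1/m(Ω_{δ−2ε,B})) ∫_{Ω_{δ−2ε,B}} φ_ε(g⁻¹hΓ') dm(g) ≥ 1/V(Γ) − α, then |sΓt⁻¹ ∩ Ω_{δ,B}| ≥ (1/V(Γ) − α)·(1 − 2Dε/δ)·m(Ω_{δ,B}). -/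

import Mathlib

open MeasureTheory Set Pointwise

set_option maxHeartbeats 2000000

/-- Lower bound step: if `W·B·W = B`, `0 < δ ≤ r₀/2`, `0 < ε ≤ δ/4`,
`D > 0` satisfies the lower volume-regularity property, `α > 0`, `ε < δ/(2D)`, and there
is `h ∈ U_ε` with `(1/m(Ω_{δ−2ε,B})) ∫_{Ω_{δ−2ε,B}} φ_ε(g⁻¹hΓ') dm(g) ≥ 1/V(Γ) − α`,
then `|sΓt⁻¹ ∩ Ω_{δ,B}| ≥ (1/V(Γ) − α)·(1 − 2Dε/δ)·m(Ω_{δ,B})`. -/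
theorem stmt9
    {Ginf Gf : Type*}
    [Group Ginf] [TopologicalSpace Ginf] [IsTopologicalGroup Ginf]
    [LocallyCompactSpace Ginf] [SecondCountableTopology Ginf]
    [MeasurableSpace Ginf] [BorelSpace Ginf]
    [Group Gf] [TopologicalSpace Gf] [IsTopologicalGroup Gf]
    [LocallyCompactSpace Gf] [SecondCountableTopology Gf]
    [TotallyDisconnectedSpace Gf]
    [MeasurableSpace Gf] [BorelSpace Gf]
    (minf : Measure Ginf) [Measure.IsHaarMeasure minf]
    (mf : Measure Gf) [Measure.IsHaarMeasure mf]
    (hunimod : (minf.prod mf).IsMulRightInvariant)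
    (r₀ : ℝ) (hr₀ : 0 < r₀) (d : ℝ) (hd : 0 < d)
    (p : ℝ → ℝ) (L : NNReal) (hp : LipschitzOnWith L p (Icc 0 r₀))
    (hppos : ∀ r ∈ Icc (0:ℝ) r₀, 0 < p r)
    (O : ℝ → Set Ginf)
    (hOmeas : ∀ r ∈ Ioc (0:ℝ) r₀, MeasurableSet (O r))
    (hOsymm : ∀ r ∈ Ioc (0:ℝ) r₀, (O r)⁻¹ = O r)
    (hObdd : ∀ r ∈ Ioc (0:ℝ) r₀, IsCompact (closure (O r)))
    (hOnhd : ∀ r ∈ Ioc (0:ℝ) r₀, O r ∈ nhds (1 : Ginf))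
    (hOprod : ∀ r r' : ℝ, 0 < r → 0 < r' → r + r' ≤ r₀ → O r * O r' = O (r + r'))
    (hOvol : ∀ r ∈ Ioc (0:ℝ) r₀, minf (O r) = ENNReal.ofReal (r ^ d * p r))
    -- the lattice `Γ`, of covolume `V`, and the elements `s`, `t`
    (Γ : Subgroup (Ginf × Gf)) (hΓdisc : DiscreteTopology Γ)
    (V : ℝ) (hV : 0 < V)
    (F : Set (Ginf × Gf)) (hFmeas : MeasurableSet F)
    (hFfund : ∀ g : Ginf × Gf, ∃! γ : Γ, g * (γ : Ginf × Gf) ∈ F)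
    (hFV : (minf.prod mf) F = ENNReal.ofReal V)
    (s t : Ginf × Gf)
    -- the compact open subgroup `W` and the set `B`
    (W : Subgroup Gf) (hWcomp : IsCompact (W : Set Gf)) (hWopen : IsOpen (W : Set Gf))
    (B : Set Gf) (hBmeas : MeasurableSet B) (hB0 : 0 < mf B) (hBfin : mf B < ⊤)
    (hWBW : (W : Set Gf) * B * (W : Set Gf) = B)
    -- the parameters `δ`, `ε` and the regularity constant `D`
    (δ ε : ℝ) (hδ0 : 0 < δ) (hδr : δ ≤ r₀ / 2) (hε0 : 0 < ε) (hεδ : ε ≤ δ / 4)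
    (D : ℝ) (hD0 : 0 < D)
    (hDreg : ∀ δ' ε' : ℝ, 0 < δ' → δ' ≤ r₀ / 2 → 0 < ε' → ε' ≤ δ' / 2 →
      ENNReal.ofReal (1 - D * ε' / δ') * (minf.prod mf) ((O δ') ×ˢ B)
        ≤ (minf.prod mf) ((O (δ' - ε')) ×ˢ B))
    -- the averaging bound at some point `h ∈ U_ε`
    (α : ℝ) (hα : 0 < α) (hεD : ε < δ / (2 * D))
    (havg : ∃ h ∈ (O ε) ×ˢ (W : Set Gf),
      1 / V - α ≤
      (((minf.prod mf) ((O (δ - 2*ε)) ×ˢ B)).toReal)⁻¹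
          * ∫ g in (O (δ - 2*ε)) ×ˢ B,
              (∑' γ : ((fun γ : Ginf × Gf => s * γ * t⁻¹) '' (Γ : Set (Ginf × Gf))),
                Set.indicator ((O ε) ×ˢ (W : Set Gf))
                  (fun _ => (((minf.prod mf) ((O ε) ×ˢ (W : Set Gf))).toReal)⁻¹)
                  (g⁻¹ * h * γ)) ∂(minf.prod mf)) :
    (1 / V - α) * (1 - 2 * D * ε / δ) * ((minf.prod mf) ((O δ) ×ˢ B)).toReal
      ≤ (((fun γ : Ginf × Gf => s * γ * t⁻¹) '' (Γ : Set (Ginf × Gf))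
        ∩ (O δ) ×ˢ B).ncard : ℝ) := by
  classical
  obtain ⟨h, hhU, havg⟩ := havg
  set μ : Measure (Ginf × Gf) := minf.prod mf with hμdef
  set S : Set (Ginf × Gf) := (fun γ : Ginf × Gf => s * γ * t⁻¹) '' (Γ : Set (Ginf × Gf))
    with hSdef
  set U : Set (Ginf × Gf) := (O ε) ×ˢ (W : Set Gf) with hUdef
  set ΩD : Set (Ginf × Gf) := (O δ) ×ˢ B with hΩDdef
  set Ω' : Set (Ginf × Gf) := (O (δ - 2*ε)) ×ˢ B with hΩ'def
  -- basic range facts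
  have hεI : ε ∈ Ioc (0:ℝ) r₀ := ⟨hε0, by linarith⟩
  have hδI : δ ∈ Ioc (0:ℝ) r₀ := ⟨hδ0, by linarith⟩
  have hδ2εI : δ - 2*ε ∈ Ioc (0:ℝ) r₀ := ⟨by linarith, by linarith⟩
  have hOpos : ∀ r ∈ Ioc (0:ℝ) r₀, minf (O r) ≠ 0 ∧ minf (O r) ≠ ⊤ := by
    intro r hr
    have hpr : 0 < p r := hppos r ⟨hr.1.le, hr.2⟩
    have hrd : 0 < r ^ d := Real.rpow_pos_of_pos hr.1 d
    rw [hOvol r hr]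
    constructor
    · simp [ENNReal.ofReal_eq_zero, not_le, mul_pos hrd hpr]
    · exact ENNReal.ofReal_ne_top
  have hWpos : mf (W : Set Gf) ≠ 0 := (hWopen.measure_pos mf ⟨1, W.one_mem⟩).ne'
  have hWfin : mf (W : Set Gf) ≠ ⊤ := hWcomp.measure_lt_top.ne
  have hU0 : μ U ≠ 0 := by
    rw [hUdef, hμdef, Measure.prod_prod]
    exact mul_ne_zero (hOpos ε hεI).1 hWpos
  have hUtop : μ U ≠ ⊤ := by
    rw [hUdef, hμdef, Measure.prod_prod]
    exact ENNReal.mul_ne_top (hOpos ε hεI).2 hWfin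
  have hΩ'0 : μ Ω' ≠ 0 := by
    rw [hΩ'def, hμdef, Measure.prod_prod]
    exact mul_ne_zero (hOpos _ hδ2εI).1 hB0.ne'
  have hΩ'top : μ Ω' ≠ ⊤ := by
    rw [hΩ'def, hμdef, Measure.prod_prod]
    exact ENNReal.mul_ne_top (hOpos _ hδ2εI).2 hBfin.ne
  have hΩDtop : μ ΩD ≠ ⊤ := by
    rw [hΩDdef, hμdef, Measure.prod_prod]
    exact ENNReal.mul_ne_top (hOpos _ hδI).2 hBfin.ne
  have hUmeas : MeasurableSet U := (hOmeas ε hεI).prod hWopen.measurableSet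
  have hOe : ∀ a : Ginf, a⁻¹ ∈ O ε ↔ a ∈ O ε := by
    intro a
    conv_rhs => rw [← hOsymm ε hεI]
    exact Iff.rfl
  have hUsymm : U⁻¹ = U := by
    ext x
    simp only [hUdef, Set.mem_inv, Set.mem_prod, Prod.fst_inv, Prod.snd_inv,
      SetLike.mem_coe, inv_mem_iff, hOe]
  -- the triple product fact
  have htriple : ∀ a ∈ O ε, ∀ b ∈ O (δ - 2*ε), ∀ c ∈ O ε, a * b * c ∈ O δ := by
    intro a ha b hb c hc
    have e1 : O ε * O (δ - 2*ε) = O (δ - ε) := by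
      have := hOprod ε (δ - 2*ε) hε0 (by linarith) (by linarith)
      rwa [show ε + (δ - 2*ε) = δ - ε by ring] at this
    have e2 : O (δ - ε) * O ε = O δ := by
      have := hOprod (δ - ε) ε (by linarith) hε0 (by linarith)
      rwa [show δ - ε + ε = δ by ring] at this
    rw [← e2, ← e1]
    exact mul_mem_mul (mul_mem_mul ha hb) hc
  have hWBW' : ∀ w ∈ (W : Set Gf), ∀ b ∈ B, ∀ w' ∈ (W : Set Gf), w * b * w' ∈ B := by
    intro w hw b hb w' hw'
    rw [← hWBW]
    exact mul_mem_mul (mul_mem_mul hw hb) hw'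
  -- membership transfer
  have hmem : ∀ x : Ginf × Gf, ∀ g ∈ Ω', g⁻¹ * h * x ∈ U → x ∈ ΩD := by
    intro x g hg hu
    have hx : x = h⁻¹ * g * (g⁻¹ * h * x) := by group
    obtain ⟨hg1, hg2⟩ := hg
    obtain ⟨hu1, hu2⟩ := hu
    obtain ⟨hh1, hh2⟩ := hhU
    have hh1' : h⁻¹.1 ∈ O ε := by
      rw [← hOsymm ε hεI]; simpa [Set.mem_inv] using hh1
    constructor
    · rw [hx]
      exact htriple _ hh1' _ hg1 _ hu1
    · rw [hx]
      exact hWBW' _ (by simpa using W.inv_mem hh2) _ hg2 _ hu2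
  -- countability of S
  haveI : DiscreteTopology ↥(Γ : Set (Ginf × Gf)) := hΓdisc
  haveI : Countable ↥(Γ : Set (Ginf × Gf)) := countable_of_Lindelof_of_discrete
  have hScount : S.Countable := (Set.countable_coe_iff.mp ‹_›).image _
  haveI : Countable ↥S := hScount.to_subtype
  -- finiteness of S ∩ ΩD
  have hμsmul : ∀ (x : Ginf × Gf) (A : Set (Ginf × Gf)), μ (x • A) = μ A := by
    intro x A
    rw [← Set.preimage_smul_inv]
    simpa using measure_preimage_mul μ x⁻¹ A
  have hTfin : (S ∩ ΩD).Finite := by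
    by_contra hinf
    have hinf' : (S ∩ ΩD).Infinite := hinf
    -- discreteness of Γ at the identity
    obtain ⟨U₀, hU₀open, hU₀pre⟩ : ∃ U₀ : Set (Ginf × Gf), IsOpen U₀ ∧
        (Subtype.val ⁻¹' U₀ : Set Γ) = {1} := by
      have h1 : IsOpen ({1} : Set Γ) := isOpen_discrete _
      rwa [isOpen_induced_iff] at h1
    have h1U₀ : (1 : Ginf × Gf) ∈ U₀ := by
      have h2 : (1 : Γ) ∈ (Subtype.val ⁻¹' U₀ : Set Γ) := by rw [hU₀pre]; rfl
      simpa using h2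
    have hU₀sub : ∀ γ : Ginf × Gf, γ ∈ Γ → γ ∈ U₀ → γ = 1 := by
      intro γ hγ hγU
      have h2 : (⟨γ, hγ⟩ : Γ) ∈ (Subtype.val ⁻¹' U₀ : Set Γ) := hγU
      rw [hU₀pre] at h2
      simpa [Subtype.ext_iff] using h2
    -- conjugated neighborhood
    set V₀ : Set (Ginf × Gf) := (fun x => t⁻¹ * x * t) ⁻¹' U₀ with hV₀def
    have hV₀open : IsOpen V₀ :=
      hU₀open.preimage ((continuous_const.mul continuous_id).mul continuous_const)
    have h1V₀ : (1 : Ginf × Gf) ∈ V₀ := by simp [hV₀def, h1U₀]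
    have hV₀sub : ∀ γ : Ginf × Gf, γ ∈ Γ → t * γ * t⁻¹ ∈ V₀ → γ = 1 := by
      intro γ hγ hmem'
      apply hU₀sub γ hγ
      have h2 : t⁻¹ * (t * γ * t⁻¹) * t = γ := by group
      rwa [hV₀def, Set.mem_preimage, h2] at hmem'
    -- product neighborhoods
    have hV₀nhds : V₀ ∈ nhds ((1 : Ginf), (1 : Gf)) := hV₀open.mem_nhds h1V₀
    obtain ⟨V₁, hV₁, V₂, hV₂, hV₁₂⟩ := mem_nhds_prod_iff.mp hV₀nhds
    obtain ⟨A₁, hA₁open, hA₁1, hA₁mul⟩ := exists_open_nhds_one_mul_subset hV₁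
    obtain ⟨A₂, hA₂open, hA₂1, hA₂mul⟩ := exists_open_nhds_one_mul_subset hV₂
    set K₁ : Set Ginf := A₁ ∩ A₁⁻¹ ∩ O ε with hK₁def
    set K₂ : Set Gf := A₂ ∩ A₂⁻¹ ∩ (W : Set Gf) with hK₂def
    have hK₁nhds : K₁ ∈ nhds (1 : Ginf) := by
      refine Filter.inter_mem (Filter.inter_mem (hA₁open.mem_nhds hA₁1) ?_) (hOnhd ε hεI)
      exact hA₁open.inv.mem_nhds (by simp [Set.mem_inv, hA₁1])
    have hK₂nhds : K₂ ∈ nhds (1 : Gf) := by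
      refine Filter.inter_mem (Filter.inter_mem (hA₂open.mem_nhds hA₂1) ?_)
        (hWopen.mem_nhds W.one_mem)
      exact hA₂open.inv.mem_nhds (by simp [Set.mem_inv, hA₂1])
    have hPnhds : (K₁ ×ˢ K₂) ∈ nhds ((1 : Ginf), (1 : Gf)) := prod_mem_nhds hK₁nhds hK₂nhds
    have hPpos : 0 < μ (K₁ ×ˢ K₂) := Measure.measure_pos_of_mem_nhds μ hPnhds
    have hPmeas : MeasurableSet (K₁ ×ˢ K₂) :=
      ((hA₁open.measurableSet.inter hA₁open.inv.measurableSet).inter (hOmeas ε hεI)).prod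
        ((hA₂open.measurableSet.inter hA₂open.inv.measurableSet).inter hWopen.measurableSet)
    -- products of two elements of P lie in V₀
    have hPP : ∀ p ∈ K₁ ×ˢ K₂, ∀ q ∈ K₁ ×ˢ K₂, q * p⁻¹ ∈ V₀ := by
      rintro ⟨p1, p2⟩ ⟨hp1, hp2⟩ ⟨q1, q2⟩ ⟨hq1, hq2⟩
      apply hV₁₂
      constructor
      · exact hA₁mul (Set.mul_mem_mul hq1.1.1 hp1.1.2)
      · exact hA₂mul (Set.mul_mem_mul hq2.1.1 hp2.1.2)
    -- pairwise disjointness of translates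
    have hdisj : ∀ x ∈ S, ∀ y ∈ S, x ≠ y →
        Disjoint (x • (K₁ ×ˢ K₂)) (y • (K₁ ×ˢ K₂)) := by
      intro x hx y hy hxy
      obtain ⟨γ, hγ, rfl⟩ := hx
      obtain ⟨γ', hγ', rfl⟩ := hy
      rw [Set.disjoint_left]
      rintro z ⟨p, hp, rfl⟩ ⟨q, hq, hzq⟩
      apply hxy
      have hzq' : (s * γ * t⁻¹) * p = (s * γ' * t⁻¹) * q := by
        simpa [smul_eq_mul] using hzq.symm
      have hqp : q * p⁻¹ ∈ V₀ := hPP p hp q hq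
      have heq : t * (γ'⁻¹ * γ) * t⁻¹ = q * p⁻¹ := by
        have hx' : (s * γ * t⁻¹) = (s * γ' * t⁻¹) * q * p⁻¹ := by
          rw [mul_assoc, eq_mul_inv_iff_mul_eq, ← mul_assoc]
          exact hzq'
        calc t * (γ'⁻¹ * γ) * t⁻¹ = (s * γ' * t⁻¹)⁻¹ * (s * γ * t⁻¹) := by group
          _ = q * p⁻¹ := by rw [hx']; group
      have hγγ' : γ'⁻¹ * γ = 1 := hV₀sub _ (Γ.mul_mem (Γ.inv_mem hγ') hγ) (heq ▸ hqp)
      have : γ = γ' := by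
        rw [← inv_mul_eq_one]; rw [inv_mul_eq_one] at hγγ' ⊢; exact hγγ'.symm
      rw [this]
    -- translates stay in a set of finite measure
    have hδεr : δ + ε ≤ r₀ := by linarith
    have hcover : ∀ x ∈ S ∩ ΩD, x • (K₁ ×ˢ K₂) ⊆ (O (δ + ε)) ×ˢ B := by
      rintro x ⟨hxS, hx1, hx2⟩ z ⟨p, hp, rfl⟩
      obtain ⟨hp1, hp2⟩ := hp
      have e : O δ * O ε = O (δ + ε) := hOprod δ ε hδ0 hε0 hδεr
      constructor
      · show (x • p).1 ∈ O (δ + ε)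
        rw [← e]
        simpa [smul_eq_mul] using Set.mul_mem_mul hx1 hp1.2
      · show (x • p).2 ∈ B
        have h2 := hWBW' 1 W.one_mem x.2 hx2 p.2 hp2.2
        simpa [smul_eq_mul] using h2
    have hYfin : μ ((O (δ + ε)) ×ˢ B) < ⊤ := by
      rw [hμdef, Measure.prod_prod]
      exact (ENNReal.mul_ne_top (hOpos (δ + ε) ⟨by linarith, hδεr⟩).2 hBfin.ne).lt_top
    -- infinitely many disjoint translates of positive measure: contradiction
    let e := hinf'.natEmbedding
    set fset : ℕ → Set (Ginf × Gf) := fun n => ((e n : Ginf × Gf)) • (K₁ ×ˢ K₂) with hfsetdef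
    have hfmeas : ∀ n, MeasurableSet (fset n) := fun n => hPmeas.const_smul _
    have hfdisj : Pairwise (Function.onFun Disjoint fset) := by
      intro m n hmn
      exact hdisj _ (e m).2.1 _ (e n).2.1
        (fun habs => hmn (e.injective (Subtype.ext habs)))
    have hUnion : (⋃ n, fset n) ⊆ (O (δ + ε)) ×ˢ B :=
      Set.iUnion_subset fun n => hcover _ (e n).2
    have hμU : μ (⋃ n, fset n) = ∑' n : ℕ, μ (fset n) := measure_iUnion hfdisj hfmeas
    have hμf : ∀ n, μ (fset n) = μ (K₁ ×ˢ K₂) := fun n => hμsmul _ _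
    have htop : μ (⋃ n, fset n) = ⊤ := by
      rw [hμU]
      simp only [hμf]
      exact ENNReal.tsum_const_eq_top_of_ne_zero hPpos.ne'
    have hcontr := (measure_mono hUnion).trans_lt hYfin
    rw [htop] at hcontr
    exact absurd hcontr (by simp)
  -- main integral bound
  have key1 : (∫ g in Ω',
      (∑' γ : S, Set.indicator U (fun _ => ((μ U).toReal)⁻¹) (g⁻¹ * h * γ)) ∂μ)
      ≤ ((S ∩ ΩD).ncard : ℝ) := by
    set c : ℝ := ((μ U).toReal)⁻¹ with hcdef
    have hc0 : 0 ≤ c := by positivity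
    set cE : ENNReal := ENNReal.ofReal c with hcEdef
    have hone : cE * μ U = 1 := by
      have hx : 0 < (μ U).toReal := ENNReal.toReal_pos hU0 hUtop
      calc cE * μ U = ENNReal.ofReal ((μ U).toReal⁻¹) * ENNReal.ofReal ((μ U).toReal) := by
            rw [hcEdef, hcdef, ENNReal.ofReal_toReal hUtop]
        _ = ENNReal.ofReal ((μ U).toReal⁻¹ * (μ U).toReal) :=
            (ENNReal.ofReal_mul (by positivity)).symm
        _ = 1 := by rw [inv_mul_cancel₀ hx.ne']; simp
    -- per-translate estimate
    have hterm : ∀ γ : S,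
        (∫⁻ g in Ω', ENNReal.ofReal (Set.indicator U (fun _ => c) (g⁻¹ * h * ↑γ)) ∂μ)
          ≤ Set.indicator ΩD (fun _ => (1 : ENNReal)) ↑γ := by
      intro γ
      set x : Ginf × Gf := (↑γ : Ginf × Gf) with hxdef
      have hτ : Measurable (fun g : Ginf × Gf => g⁻¹ * h * x) :=
        (measurable_inv.mul_const h).mul_const x
      have hPm : MeasurableSet ((fun g : Ginf × Gf => g⁻¹ * h * x) ⁻¹' U) := hτ hUmeas
      have hpre : (fun g : Ginf × Gf => g⁻¹ * h * x) ⁻¹' U = (h * x) • U := by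
        ext g
        rw [Set.mem_preimage, Set.mem_smul_set_iff_inv_smul_mem, smul_eq_mul,
          show (h * x)⁻¹ * g = (g⁻¹ * h * x)⁻¹ by group, ← Set.mem_inv, hUsymm]
      calc (∫⁻ g in Ω', ENNReal.ofReal (Set.indicator U (fun _ => c) (g⁻¹ * h * x)) ∂μ)
          = (∫⁻ g in Ω',
              Set.indicator ((fun g : Ginf × Gf => g⁻¹ * h * x) ⁻¹' U) (fun _ => cE) g ∂μ) := by
            apply lintegral_congr
            intro g
            by_cases hg : g⁻¹ * h * x ∈ U <;>
              simp [Set.indicator_of_mem, Set.indicator_of_notMem, hg, Set.mem_preimage, hcEdef]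
        _ = cE * (μ.restrict Ω') ((fun g : Ginf × Gf => g⁻¹ * h * x) ⁻¹' U) :=
            lintegral_indicator_const hPm cE
        _ = cE * μ (((fun g : Ginf × Gf => g⁻¹ * h * x) ⁻¹' U) ∩ Ω') := by
            rw [Measure.restrict_apply hPm]
        _ ≤ Set.indicator ΩD (fun _ => (1 : ENNReal)) x := by
            by_cases hxΩ : x ∈ ΩD
            · rw [Set.indicator_of_mem hxΩ]
              calc cE * μ (((fun g : Ginf × Gf => g⁻¹ * h * x) ⁻¹' U) ∩ Ω')
                  ≤ cE * μ ((h * x) • U) := by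
                    rw [hpre]
                    exact mul_le_mul_right (measure_mono Set.inter_subset_left) cE
                _ = cE * μ U := by rw [hμsmul]
                _ = 1 := hone
            · have hempty : ((fun g : Ginf × Gf => g⁻¹ * h * x) ⁻¹' U) ∩ Ω' = ∅ := by
                ext g
                simp only [Set.mem_inter_iff, Set.mem_preimage, Set.mem_empty_iff_false,
                  iff_false, not_and]
                intro hgU hgΩ
                exact hxΩ (hmem x g hgΩ hgU)
              rw [hempty, Set.indicator_of_notMem hxΩ]
              simp
    -- counting estimate
    have hcount : (∑' γ : S, Set.indicator ΩD (fun _ => (1 : ENNReal)) ↑γ)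
        ≤ ((S ∩ ΩD).ncard : ENNReal) := by
      rw [ENNReal.tsum_eq_iSup_sum]
      refine iSup_le fun fs => ?_
      calc (∑ γ ∈ fs, Set.indicator ΩD (fun _ => (1 : ENNReal)) ↑γ)
          = ∑ γ ∈ fs, (if (↑γ : Ginf × Gf) ∈ ΩD then (1 : ENNReal) else 0) := by
            refine Finset.sum_congr rfl fun γ _ => ?_
            by_cases hγ : (↑γ : Ginf × Gf) ∈ ΩD <;> simp [hγ]
        _ = ((fs.filter (fun γ : S => (↑γ : Ginf × Gf) ∈ ΩD)).card : ENNReal) := by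
            rw [Finset.sum_boole]
        _ ≤ (((S ∩ ΩD).ncard : ℕ) : ENNReal) := by
            rw [Nat.cast_le, Set.ncard_eq_toFinset_card _ hTfin]
            refine Finset.card_le_card_of_injOn (fun γ => (↑γ : Ginf × Gf)) ?_ ?_
            · intro γ hγ
              rw [Finset.mem_coe, Set.Finite.mem_toFinset]
              exact ⟨γ.2, (Finset.mem_filter.mp hγ).2⟩
            · intro a _ b _ hab
              exact Subtype.ext hab
    -- put the estimates together
    have hmain : (∫⁻ g in Ω',
        ENNReal.ofReal (∑' γ : S, Set.indicator U (fun _ => c) (g⁻¹ * h * ↑γ)) ∂μ)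
        ≤ ((S ∩ ΩD).ncard : ENNReal) := by
      have hstep : (∫⁻ g in Ω',
          ENNReal.ofReal (∑' γ : S, Set.indicator U (fun _ => c) (g⁻¹ * h * ↑γ)) ∂μ)
          ≤ ∑' γ : S, (∫⁻ g in Ω',
              ENNReal.ofReal (Set.indicator U (fun _ => c) (g⁻¹ * h * ↑γ)) ∂μ) := by
        have hptwise : ∀ g : Ginf × Gf,
            ENNReal.ofReal (∑' γ : S, Set.indicator U (fun _ => c) (g⁻¹ * h * ↑γ))
              ≤ ∑' γ : S, ENNReal.ofReal (Set.indicator U (fun _ => c) (g⁻¹ * h * ↑γ)) := by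
          intro g
          by_cases hs : Summable (fun γ : S => Set.indicator U (fun _ => c) (g⁻¹ * h * ↑γ))
          · rw [ENNReal.ofReal_tsum_of_nonneg
              (fun γ => Set.indicator_nonneg (fun _ _ => hc0) _) hs]
          · rw [tsum_eq_zero_of_not_summable hs]
            simp
        calc (∫⁻ g in Ω',
            ENNReal.ofReal (∑' γ : S, Set.indicator U (fun _ => c) (g⁻¹ * h * ↑γ)) ∂μ)
            ≤ (∫⁻ g in Ω',
              (∑' γ : S, ENNReal.ofReal (Set.indicator U (fun _ => c) (g⁻¹ * h * ↑γ))) ∂μ) :=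
              lintegral_mono hptwise
          _ = ∑' γ : S, (∫⁻ g in Ω',
              ENNReal.ofReal (Set.indicator U (fun _ => c) (g⁻¹ * h * ↑γ)) ∂μ) := by
              refine lintegral_tsum fun γ : S => ?_
              exact (ENNReal.measurable_ofReal.comp ((measurable_const.indicator hUmeas).comp
                ((measurable_inv.mul_const h).mul_const (↑γ : Ginf × Gf)))).aemeasurable
      exact hstep.trans ((ENNReal.tsum_le_tsum hterm).trans hcount)
    by_cases hFm : AEStronglyMeasurable
        (fun g => ∑' γ : S, Set.indicator U (fun _ => c) (g⁻¹ * h * ↑γ)) (μ.restrict Ω')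
    · have hnn : 0 ≤ᵐ[μ.restrict Ω']
          (fun g => ∑' γ : S, Set.indicator U (fun _ => c) (g⁻¹ * h * ↑γ)) := by
        filter_upwards with g
        exact tsum_nonneg fun γ => Set.indicator_nonneg (fun _ _ => hc0) _
      rw [integral_eq_lintegral_of_nonneg_ae hnn hFm]
      calc (∫⁻ g in Ω',
            ENNReal.ofReal (∑' γ : S, Set.indicator U (fun _ => c) (g⁻¹ * h * ↑γ)) ∂μ).toReal
          ≤ (((S ∩ ΩD).ncard : ENNReal)).toReal := ENNReal.toReal_mono (by simp) hmain
        _ = ((S ∩ ΩD).ncard : ℝ) := by simp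
    · rw [integral_undef (fun hInt => hFm hInt.aestronglyMeasurable)]
      positivity
  -- volume regularity
  have h2D : 0 ≤ 1 - 2 * D * ε / δ := by
    rw [lt_div_iff₀ (by positivity)] at hεD
    have : 2 * D * ε / δ ≤ 1 := by
      rw [div_le_one hδ0]; nlinarith
    linarith
  have hΩDle : (1 - 2*D*ε/δ) * (μ ΩD).toReal ≤ (μ Ω').toReal := by
    have h2 := hDreg δ (2*ε) hδ0 hδr (by linarith) (by linarith)
    rw [show δ - 2*ε = δ - 2*ε from rfl] at h2
    rw [show D * (2*ε) / δ = 2*D*ε/δ by ring] at h2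
    calc (1 - 2*D*ε/δ) * (μ ΩD).toReal
        = (ENNReal.ofReal (1 - 2*D*ε/δ) * μ ΩD).toReal := by
          rw [ENNReal.toReal_mul, ENNReal.toReal_ofReal h2D]
      _ ≤ (μ Ω').toReal := ENNReal.toReal_mono hΩ'top h2
  have hΩ'pos : 0 < (μ Ω').toReal := ENNReal.toReal_pos hΩ'0 hΩ'top
  rcases le_or_gt (1/V - α) 0 with hc | hc
  · have h1 : (1/V - α) * (1 - 2*D*ε/δ) ≤ 0 := mul_nonpos_of_nonpos_of_nonneg hc h2D
    calc (1/V - α) * (1 - 2*D*ε/δ) * (μ ΩD).toReal ≤ 0 :=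
        mul_nonpos_of_nonpos_of_nonneg h1 ENNReal.toReal_nonneg
      _ ≤ _ := Nat.cast_nonneg _
  · have h3 : 1/V - α ≤ ((μ Ω').toReal)⁻¹ * ((S ∩ ΩD).ncard : ℝ) := by
      refine havg.trans ?_
      exact mul_le_mul_of_nonneg_left key1 (by positivity)
    have h4 : (1/V - α) * (μ Ω').toReal ≤ ((S ∩ ΩD).ncard : ℝ) := by
      have := mul_le_mul_of_nonneg_right h3 hΩ'pos.le
      calc (1/V - α) * (μ Ω').toReal
          ≤ ((μ Ω').toReal)⁻¹ * ((S ∩ ΩD).ncard : ℝ) * (μ Ω').toReal := this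
        _ = ((S ∩ ΩD).ncard : ℝ) := by field_simp
    calc (1/V - α) * (1 - 2*D*ε/δ) * (μ ΩD).toReal
        = (1/V - α) * ((1 - 2*D*ε/δ) * (μ ΩD).toReal) := by ring
      _ ≤ (1/V - α) * (μ Ω').toReal := mul_le_mul_of_nonneg_left hΩDle hc.le
      _ ≤ ((S ∩ ΩD).ncard : ℝ) := h4
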